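/- Let p ≡ 7 (mod 8) be a prime and let √2 denote a square root of 2 in Z_p (which exists since 2 is a quadratic residue modulo p). Set θ = 1 + √2. If the image of θ generates the quotient group Z_p^*/{1,−1} (equivalently, every nonzero element of Z_p equals ±θ^i for some i), then there exists an APS(p, 1, θ−1). -/

import Mathlib

open scoped Classical

/-- `IsPPS A₁ A₂ S`: `S` is a partial partitionable set for the subsets `A₁`, `A₂`
of the abelian group `G`: the multiset of the four elements `x, -x, y, -y` over all
pairs `(x,y) ∈ S` covers each element of `G \ A₁` exactly once (and elements of `A₁`
zero times), and the multiset of the four elements `x+y, -(x+y), x-y, -(x-y)` covers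
each element of `G \ A₂` exactly once (and elements of `A₂` zero times). -/
def IsPPS {G : Type*} [AddCommGroup G] (A₁ A₂ : Set G) (S : Finset (G × G)) : Prop :=
  (∀ z : G, (S.val.bind fun p => ({p.1, -p.1, p.2, -p.2} : Multiset G)).count z
      = if z ∈ A₁ then 0 else 1) ∧
  (∀ z : G, (S.val.bind fun p =>
      ({p.1 + p.2, -(p.1 + p.2), p.1 - p.2, -(p.1 - p.2)} : Multiset G)).count z
      = if z ∈ A₂ then 0 else 1)

/-- An almost partitionable set `APS(v, α, β)`. -/
def IsAPS (v : ℕ) (α β : ZMod v) (S : Finset (ZMod v × ZMod v)) : Prop :=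
  IsPPS ({0, α, -α} : Set (ZMod v)) ({0, β, -β} : Set (ZMod v)) S

/-- A partitionable set `PS(v)`. -/
def IsPS (v : ℕ) (S : Finset (ZMod v × ZMod v)) : Prop :=
  IsPPS ({0} : Set (ZMod v)) ({0} : Set (ZMod v)) S


lemma count_helper {p : ℕ} [Fact (Nat.Prime p)] (A : Set (ZMod p)) (B : Finset (ZMod p))
    (hAB : ∀ z : ZMod p, z ∈ A ↔ z ∈ B)
    (M : Multiset (ZMod p))
    (hM : Multiset.card M ≤ p - B.card)
    (hcov : ∀ z : ZMod p, z ∉ B → z ∈ M) :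
    ∀ z : ZMod p, Multiset.count z M = if z ∈ A then 0 else 1 := by
  have hT : (Finset.univ \ B).card = p - B.card := by
    rw [Finset.card_sdiff_of_subset (Finset.subset_univ B), Finset.card_univ, ZMod.card]
  have hle : (Finset.univ \ B).val ≤ M := by
    rw [Multiset.le_iff_count]
    intro a
    by_cases ha : a ∈ Finset.univ \ B
    · have h1 : Multiset.count a (Finset.univ \ B).val = 1 :=
        Multiset.count_eq_one_of_mem (Finset.univ \ B).nodup ha
      have h2 : a ∈ M := hcov a (Finset.mem_sdiff.1 ha).2
      rw [h1]
      exact Multiset.one_le_count_iff_mem.2 h2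
    · rw [Multiset.count_eq_zero_of_notMem (fun h => ha (Finset.mem_val.mp h))]
      exact Nat.zero_le _
  have heq : (Finset.univ \ B).val = M :=
    Multiset.eq_of_le_of_card_le hle (by
      have : Multiset.card (Finset.univ \ B).val = p - B.card := hT
      rw [this]; exact hM)
  intro z
  rw [← heq]
  by_cases hz : z ∈ A
  · rw [if_pos hz, Multiset.count_eq_zero]
    intro hmem
    exact (Finset.mem_sdiff.1 (Finset.mem_val.mp hmem)).2 ((hAB z).1 hz)
  · rw [if_neg hz]
    exact Multiset.count_eq_one_of_mem (Finset.univ \ B).nodup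
      (Finset.mem_val.mpr (Finset.mem_sdiff.2 ⟨Finset.mem_univ z, fun h => hz ((hAB z).2 h)⟩))

theorem stmt9 (p : ℕ) (hp : Nat.Prime p) (hp8 : p % 8 = 7)
    (r : ZMod p) (hr : r ^ 2 = 2)
    (hgen : ∀ x : ZMod p, x ≠ 0 → ∃ i : ℕ, x = (1 + r) ^ i ∨ x = -((1 + r) ^ i)) :
    ∃ S : Finset (ZMod p × ZMod p), IsAPS p 1 ((1 + r) - 1) S := by
  haveI : Fact p.Prime := ⟨hp⟩
  have hp7 : 7 ≤ p := by omega
  set θ : ZMod p := 1 + r with hθ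
  have h2 : (2 : ZMod p) ≠ 0 := by
    have : ((2 : ℕ) : ZMod p) ≠ 0 := by
      rw [Ne, ZMod.natCast_eq_zero_iff]
      intro h
      have := Nat.le_of_dvd (by norm_num) h
      omega
    simpa using this
  have hr0 : r ≠ 0 := by
    intro h
    rw [h] at hr
    simp at hr
    exact h2 hr.symm
  have hθinv : θ * (θ - 2) = 1 := by
    rw [hθ]; linear_combination hr
  have hθ0 : θ ≠ 0 := left_ne_zero_of_mul_eq_one hθinv
  set n : ℕ := (p - 1) / 2 with hn
  set m : ℕ := (n - 1) / 2 with hm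
  have hnm : p = 2 * n + 1 ∧ n = 2 * m + 1 ∧ 3 ≤ n := by omega
  -- θ^n = ±1
  have hθpow : θ ^ n = 1 ∨ θ ^ n = -1 := by
    have h1 : θ ^ (p - 1) = 1 := ZMod.pow_card_sub_one_eq_one hθ0
    have h2' : (θ ^ n) ^ 2 = 1 := by
      rw [← pow_mul, show n * 2 = p - 1 by omega]; exact h1
    have h3 : (θ ^ n - 1) * (θ ^ n + 1) = 0 := by linear_combination h2'
    rcases mul_eq_zero.1 h3 with h | h
    · left; linear_combination h
    · right; linear_combination h
  -- every nonzero element is ±θ^i with i < n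
  have hex : ∀ x : ZMod p, x ≠ 0 → ∃ i, i < n ∧ (x = θ ^ i ∨ x = -θ ^ i) := by
    intro x hx
    obtain ⟨i, hi⟩ := hgen x hx
    have hdecomp : θ ^ i = (θ ^ n) ^ (i / n) * θ ^ (i % n) := by
      rw [← pow_mul, ← pow_add, Nat.div_add_mod i n]
    have hpm : θ ^ i = θ ^ (i % n) ∨ θ ^ i = -θ ^ (i % n) := by
      rcases hθpow with h | h
      · left; rw [hdecomp, h, one_pow, one_mul]
      · rcases Nat.even_or_odd (i / n) with he | ho
        · left; rw [hdecomp, h, he.neg_one_pow, one_mul]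
        · right; rw [hdecomp, h, ho.neg_one_pow, neg_one_mul]
    refine ⟨i % n, Nat.mod_lt _ (by omega), ?_⟩
    rcases hi with h1 | h1 <;> rcases hpm with h2 | h2
    · left; rw [h1, h2]
    · right; rw [h1, h2]
    · right; rw [h1, h2]
    · left; rw [h1, h2, neg_neg]
  -- key identities
  have key1 : ∀ j : ℕ, θ ^ (2 * j + 1) + θ ^ (2 * j + 2) = r * θ ^ (2 * j + 2) := by
    intro j
    have hsucc : θ ^ (2 * j + 2) = θ ^ (2 * j + 1) * θ := by ring
    rw [hsucc, hθ]
    linear_combination (-((1 + r) ^ (2 * j + 1))) * hr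
  have key2 : ∀ j : ℕ, θ ^ (2 * j + 1) - θ ^ (2 * j + 2) = -(r * θ ^ (2 * j + 1)) := by
    intro j
    have hsucc : θ ^ (2 * j + 2) = θ ^ (2 * j + 1) * θ := by ring
    rw [hsucc, hθ]
    ring
  -- distinctness facts
  have e10 : (1 : ZMod p) ≠ 0 := one_ne_zero
  have e1m : (1 : ZMod p) ≠ -1 := by
    intro h; apply h2; linear_combination h
  have e0m : (0 : ZMod p) ≠ -1 := by
    intro h; apply h2; linear_combination 2 * h
  have erm : r ≠ -r := by
    intro h
    apply hr0
    have : (2 : ZMod p) * r = 0 := by linear_combination h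
    rcases mul_eq_zero.1 this with h' | h'
    · exact absurd h' h2
    · exact h'
  -- the set S
  set S : Finset (ZMod p × ZMod p) :=
    (Finset.range m).image (fun j => (θ ^ (2 * j + 1), θ ^ (2 * j + 2))) with hS
  have hScard : S.card ≤ m := le_trans (Finset.card_image_le) (by simp)
  refine ⟨S, ?_, ?_⟩
  · -- first condition
    have hB : ({0, 1, -1} : Finset (ZMod p)).card = 3 := by
      rw [Finset.card_insert_of_notMem (by simp [e10.symm, e0m]),
        Finset.card_insert_of_notMem (by simp [e1m]), Finset.card_singleton]
    have := count_helper ({0, 1, -1} : Set (ZMod p)) ({0, 1, -1} : Finset (ZMod p))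
      (by intro z; simp)
      (S.val.bind fun q => ({q.1, -q.1, q.2, -q.2} : Multiset (ZMod p)))
      ?_ ?_
    · intro z; convert this z using 2
    · rw [hB, Multiset.card_bind]
      simp only [Function.comp_def]
      have h4 : ∀ x ∈ S.val, (fun q : ZMod p × ZMod p =>
          Multiset.card ({q.1, -q.1, q.2, -q.2} : Multiset (ZMod p))) x = (fun _ => 4) x :=
        fun x _ => rfl
      rw [Multiset.map_congr rfl h4, Multiset.map_const', Multiset.sum_replicate, smul_eq_mul]
      have hc : Multiset.card S.val = S.card := rfl
      rw [hc]
      omega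
    · intro z hz
      simp only [Finset.mem_insert, Finset.mem_singleton, not_or] at hz
      obtain ⟨hz0, hz1, hzm⟩ := hz
      obtain ⟨i, hin, hi⟩ := hex z hz0
      have hi0 : i ≠ 0 := by
        intro h
        rw [h, pow_zero] at hi
        rcases hi with h' | h'
        · exact hz1 h'
        · exact hzm h'
      rw [Multiset.mem_bind]
      rcases Nat.even_or_odd i with he | ho
      · obtain ⟨k, hk⟩ := he
        have hk1 : 1 ≤ k := by omega
        refine ⟨(θ ^ (2 * (k - 1) + 1), θ ^ (2 * (k - 1) + 2)), ?_, ?_⟩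
        · exact Finset.mem_val.mpr (Finset.mem_image.2 ⟨k - 1, Finset.mem_range.2 (by omega), rfl⟩)
        · have : i = 2 * (k - 1) + 2 := by omega
          rw [this] at hi
          simp only [Multiset.insert_eq_cons, Multiset.mem_cons, Multiset.mem_singleton]
          rcases hi with h' | h'
          · exact Or.inr (Or.inr (Or.inl h'))
          · exact Or.inr (Or.inr (Or.inr h'))
      · obtain ⟨k, hk⟩ := ho
        refine ⟨(θ ^ (2 * k + 1), θ ^ (2 * k + 2)), ?_, ?_⟩
        · exact Finset.mem_val.mpr (Finset.mem_image.2 ⟨k, Finset.mem_range.2 (by omega), rfl⟩)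
        · have : i = 2 * k + 1 := by omega
          rw [this] at hi
          simp only [Multiset.insert_eq_cons, Multiset.mem_cons, Multiset.mem_singleton]
          rcases hi with h' | h'
          · exact Or.inl h'
          · exact Or.inr (Or.inl h')
  · -- second condition
    have hβ : θ - 1 = r := by rw [hθ]; ring
    rw [hβ]
    have h0r : (0 : ZMod p) ∉ ({r, -r} : Finset (ZMod p)) := by
      simp only [Finset.mem_insert, Finset.mem_singleton]
      push_neg
      refine ⟨fun h => hr0 h.symm, fun h => hr0 ?_⟩
      have h' : -r = 0 := h.symm
      exact neg_eq_zero.mp h'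
    have hB : ({0, r, -r} : Finset (ZMod p)).card = 3 := by
      rw [Finset.card_insert_of_notMem h0r,
        Finset.card_insert_of_notMem (by simp [erm]), Finset.card_singleton]
    have := count_helper ({0, r, -r} : Set (ZMod p)) ({0, r, -r} : Finset (ZMod p))
      (by intro z; simp)
      (S.val.bind fun q =>
        ({q.1 + q.2, -(q.1 + q.2), q.1 - q.2, -(q.1 - q.2)} : Multiset (ZMod p)))
      ?_ ?_
    · intro z; convert this z using 2
    · rw [hB, Multiset.card_bind]
      simp only [Function.comp_def]
      have h4 : ∀ x ∈ S.val, (fun q : ZMod p × ZMod p => Multiset.card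
          ({q.1 + q.2, -(q.1 + q.2), q.1 - q.2, -(q.1 - q.2)} : Multiset (ZMod p))) x
          = (fun _ => 4) x := fun x _ => rfl
      rw [Multiset.map_congr rfl h4, Multiset.map_const', Multiset.sum_replicate, smul_eq_mul]
      have hc : Multiset.card S.val = S.card := rfl
      rw [hc]
      omega
    · intro z hz
      simp only [Finset.mem_insert, Finset.mem_singleton, not_or] at hz
      obtain ⟨hz0, hzr, hzmr⟩ := hz
      set w : ZMod p := z * r⁻¹ with hw
      have hwr : w * r = z := by
        rw [hw, mul_assoc, inv_mul_cancel₀ hr0, mul_one]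
      have hw0 : w ≠ 0 := by
        intro h; rw [h, zero_mul] at hwr; exact hz0 hwr.symm
      have hw1 : w ≠ 1 := by
        intro h; rw [h, one_mul] at hwr; exact hzr hwr.symm
      have hwm : w ≠ -1 := by
        intro h; rw [h] at hwr; apply hzmr; rw [← hwr]; ring
      obtain ⟨i, hin, hi⟩ := hex w hw0
      have hi0 : i ≠ 0 := by
        intro h
        rw [h, pow_zero] at hi
        rcases hi with h' | h'
        · exact hw1 h'
        · exact hwm h'
      have hzθ : z = r * θ ^ i ∨ z = -(r * θ ^ i) := by
        rcases hi with h' | h'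
        · left; rw [← hwr, h']; ring
        · right; rw [← hwr, h']; ring
      rw [Multiset.mem_bind]
      rcases Nat.even_or_odd i with he | ho
      · obtain ⟨k, hk⟩ := he
        have hk1 : 1 ≤ k := by omega
        refine ⟨(θ ^ (2 * (k - 1) + 1), θ ^ (2 * (k - 1) + 2)), ?_, ?_⟩
        · exact Finset.mem_val.mpr (Finset.mem_image.2 ⟨k - 1, Finset.mem_range.2 (by omega), rfl⟩)
        · have hik : i = 2 * (k - 1) + 2 := by omega
          rw [hik] at hzθ
          simp only [Multiset.insert_eq_cons, Multiset.mem_cons, Multiset.mem_singleton]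
          rcases hzθ with h' | h'
          · exact Or.inl (by rw [h', key1])
          · exact Or.inr (Or.inl (by rw [h', key1]))
      · obtain ⟨k, hk⟩ := ho
        refine ⟨(θ ^ (2 * k + 1), θ ^ (2 * k + 2)), ?_, ?_⟩
        · exact Finset.mem_val.mpr (Finset.mem_image.2 ⟨k, Finset.mem_range.2 (by omega), rfl⟩)
        · have hik : i = 2 * k + 1 := by omega
          rw [hik] at hzθ
          simp only [Multiset.insert_eq_cons, Multiset.mem_cons, Multiset.mem_singleton]
          rcases hzθ with h' | h'
          · refine Or.inr (Or.inr (Or.inr ?_))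
            rw [h', key2, neg_neg]
          · refine Or.inr (Or.inr (Or.inl ?_))
            rw [h', key2]
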